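/- Assume γ > 0 and ε ≤ 0. Then the cubic ν₂(z) = −12αβε·z³ + (24β²γ − 28αβδ)·z² + 24α²ε·z + (8α²δ − 12αβγ) has exactly one positive real root z*, this root satisfies z* ∈ (0,1], and ν₂(z) ≤ 0 for all z ∈ (0, z*). Consequently the function (p(z)g′(z))′, which equals (3√3/8)·ν₂(z)/(√(−p(z))·p(z)²), is nonpositive on (0, z*). -/

import Mathlib

private lemma aux_newton (p0 p1 p2 : ℝ) (h0 : 0 ≤ p0) (h1 : 0 ≤ p1) (h2 : 0 ≤ p2)
    (hsum : p0 + p1 + p2 = 1) :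
    3*(p0*p1*p2) ≤ (p0*p1 + p0*p2 + p1*p2)^2 := by
  nlinarith [sq_nonneg (p0*p1 - p0*p2), sq_nonneg (p0*p1 - p1*p2),
    sq_nonneg (p0*p2 - p1*p2), hsum, mul_nonneg (mul_nonneg h0 h1) h2]

private lemma aux_slt (p0 p1 p2 : ℝ) (h0 : 0 ≤ p0) (h1 : 0 ≤ p1) (h2 : 0 ≤ p2)
    (hsum : p0 + p1 + p2 = 1)
    (hs1 : 2 + 27*(p0*p1*p2) < 9*(p0*p1 + p0*p2 + p1*p2)) :
    p0*p1 + p0*p2 + p1*p2 < 1/3 := by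
  nlinarith [mul_nonneg h0 (sq_nonneg (p1-p2)), mul_nonneg h1 (sq_nonneg (p0-p2)),
    mul_nonneg h2 (sq_nonneg (p0-p1)), sq_nonneg (p0-p1), sq_nonneg (p1-p2),
    sq_nonneg (p0-p2), mul_nonneg (mul_nonneg h0 h1) h2]

private lemma aux_D (s r : ℝ) (hNewt : 3*r ≤ s^2) (hslt : s < 1/3) (hs0 : 0 < s) :
    3*r - s/3 ≤ 0 := by nlinarith

private lemma aux_c3 (A B E : ℝ) (hAB : 0 < A*B) (hE : E ≤ 0) : 0 ≤ -12*A*B*E := by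
  nlinarith [mul_nonneg hAB.le (neg_nonneg.2 hE)]

private lemma aux_c2 (A B G D : ℝ) (hAB : 0 < A*B) (hB : B < 0) (hG : 0 < G) (hD : D ≤ 0) :
    0 < 24*B^2*G - 28*A*B*D := by
  nlinarith [mul_pos (pow_pos (neg_pos.2 hB) 2) hG, mul_nonneg hAB.le (neg_nonneg.2 hD),
    sq_nonneg B]

private lemma aux_c1 (A E : ℝ) (hE : E ≤ 0) : 24*A^2*E ≤ 0 := by
  nlinarith [mul_nonneg (sq_nonneg A) (neg_nonneg.2 hE)]

private lemma aux_c0 (A B G D : ℝ) (hAB : 0 < A*B) (hG : 0 < G) (hD : D ≤ 0) :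
    8*A^2*D - 12*A*B*G < 0 := by
  nlinarith [mul_nonneg (sq_nonneg A) (neg_nonneg.2 hD), mul_pos hAB hG]

private lemma aux_nu1 (s r c : ℝ) (hr0 : 0 ≤ r) (hs1 : 2 + 27*r < 9*s)
    (hNewt : 3*r ≤ s^2) (hrc : 0 ≤ r*c) (hc1 : c ≤ 1) :
    0 ≤ 8/9*s^2 + 8/3*r*(1-15*s+27*s^2) - 8/3*(r*c)*(2-15*s+27*s^2) := by
  have hX0 : 0 ≤ 8/9*s^2 + 8/3*r*(1-15*s+27*s^2) := by
    rcases le_or_gt (27*s^2 - 15*s + 1) 0 with h | h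
    · nlinarith [mul_nonneg (sq_nonneg (3*s-1)) (by linarith : (0:ℝ) ≤ 27*s - 2),
        mul_nonneg (by linarith : (0:ℝ) ≤ 9*s - 2 - 27*r)
          (by linarith : (0:ℝ) ≤ -(27*s^2 - 15*s + 1))]
    · nlinarith [mul_nonneg hr0 h.le, sq_nonneg s]
  have hX1 : 0 ≤ 8/9*s^2 - 8/3*r := by nlinarith
  rcases eq_or_lt_of_le hr0 with h0r | h0r
  · rw [← h0r]; nlinarith [sq_nonneg s]
  · have hc0' : 0 ≤ c := by
      by_contra hcn
      push_neg at hcn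
      nlinarith [mul_pos h0r (neg_pos.2 hcn)]
    nlinarith [mul_nonneg (by linarith : (0:ℝ) ≤ 1 - c) hX0, mul_nonneg hc0' hX1]

private lemma aux_mono (c3 c2 c1 c0 w1 w2 : ℝ) (hc3 : 0 ≤ c3) (hc1 : c1 ≤ 0) (hc0 : c0 < 0)
    (hw1 : 0 < w1) (h12 : w1 < w2) :
    (c3*w1^3 + c2*w1^2 + c1*w1 + c0) * w2^2 < (c3*w2^3 + c2*w2^2 + c1*w2 + c0) * w1^2 := by
  have hw2 : 0 < w2 := hw1.trans h12
  have hsub : 0 ≤ w2 - w1 := by linarith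
  have t1 : 0 ≤ c3 * (w1^2*w2^2*(w2-w1)) := mul_nonneg hc3 (mul_nonneg (by positivity) hsub)
  have t2 : 0 ≤ (-c1) * (w1*w2*(w2-w1)) :=
    mul_nonneg (by linarith) (mul_nonneg (by positivity) hsub)
  have t3 : 0 < (-c0) * ((w2-w1)*(w2+w1)) := mul_pos (by linarith) (by nlinarith)
  nlinarith [t1, t2, t3]

set_option maxHeartbeats 1000000 in
/-- for γ > 0 and ε ≤ 0 the cubic ν₂ has exactly one positive root z*,
which lies in (0,1], ν₂ ≤ 0 on (0,z*), and consequently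
`(p·g′)′ = (3√3/8)·ν₂/(√(−p)·p²)` is nonpositive on (0,z*). -/
theorem nu2_single_root (p0 p1 p2 θ A B G D E : ℝ)
    (h0 : 0 ≤ p0) (h1 : 0 ≤ p1) (h2 : 0 ≤ p2) (hsum : p0 + p1 + p2 = 1)
    (hθ : θ ∈ Set.Icc (0:ℝ) Real.pi)
    (hA : A = (1/6) * (1 - 3*p0^2 - 3*p1^2 - 3*p2^2))
    (hB : B = -(p0*p1 + p0*p2 + p1*p2))
    (hG : G = (1/27) * (3*p1 - 1) * (3*p2 - 1) * (3*p1 + 3*p2 - 2))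
    (hD : D = (1/27) * (18*(p0*p1 + p0*p2 + p1*p2) -
        27*(p0^2*p1 + p0*p1^2 + p0^2*p2 + p1^2*p2 + p0*p2^2 + p1*p2^2)))
    (hE : E = -2*p0*p1*p2 * Real.cos θ)
    (hGpos : 0 < G) (hEneg : E ≤ 0)
    (P Q g ν2 : ℝ → ℝ)
    (hP : P = fun z => A + B*z^2)
    (hQ : Q = fun z => G + D*z^2 + E*z^3)
    (hg : g = fun z => (3/2) * (Q z / P z) * Real.sqrt (-3 / P z))
    (hν2 : ν2 = fun z => -12*A*B*E*z^3 + (24*B^2*G - 28*A*B*D)*z^2 + 24*A^2*E*z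
        + (8*A^2*D - 12*A*B*G)) :
    ∃ zs : ℝ, 0 < zs ∧ zs ≤ 1 ∧ ν2 zs = 0 ∧
      (∀ w : ℝ, 0 < w → ν2 w = 0 → w = zs) ∧
      (∀ z ∈ Set.Ioo (0:ℝ) zs, ν2 z ≤ 0) ∧
      (∀ z ∈ Set.Ioo (0:ℝ) zs,
        deriv (fun w => P w * deriv g w) z
          = (3 * Real.sqrt 3 / 8) * ν2 z / (Real.sqrt (-(P z)) * (P z)^2) ∧
        deriv (fun w => P w * deriv g w) z ≤ 0) := by
  obtain ⟨s, hs_def⟩ : ∃ s : ℝ, s = p0*p1 + p0*p2 + p1*p2 := ⟨_, rfl⟩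
  obtain ⟨r, hr_def⟩ : ∃ r : ℝ, r = p0*p1*p2 := ⟨_, rfl⟩
  obtain ⟨c, hc_def⟩ : ∃ c : ℝ, c = Real.cos θ := ⟨_, rfl⟩
  have hA' : A = s - 1/3 := by
    rw [hA, hs_def]; linear_combination (-(1:ℝ)/2 - p0/2 - p1/2 - p2/2) * hsum
  have hB' : B = -s := by rw [hB, hs_def]
  have hG' : G = (9*s - 27*r - 2)/27 := by
    rw [hG, hs_def, hr_def]; linear_combination (p1*p2 - p1/3 - p2/3) * hsum
  have hD' : D = 3*r - s/3 := by
    rw [hD, hs_def, hr_def]; linear_combination (-(p0*p1) - p0*p2 - p1*p2) * hsum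
  have hE' : E = -2*(r*c) := by rw [hE, hr_def, hc_def]; ring
  have hr0 : 0 ≤ r := by rw [hr_def]; positivity
  have hs1 : 2 + 27*r < 9*s := by
    have h := hGpos; rw [hG'] at h; linarith
  have hNewt : 3*r ≤ s^2 := by
    rw [hs_def, hr_def]; exact aux_newton p0 p1 p2 h0 h1 h2 hsum
  have hslt : s < 1/3 := by
    rw [hs_def]
    rw [hs_def, hr_def] at hs1
    exact aux_slt p0 p1 p2 h0 h1 h2 hsum hs1
  have hs29 : 2/9 < s := by linarith
  have hAneg : A < 0 := by rw [hA']; linarith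
  have hBneg : B < 0 := by rw [hB']; linarith
  have hDle : D ≤ 0 := by rw [hD']; exact aux_D s r hNewt hslt (by linarith)
  have hABpos : 0 < A * B := mul_pos_of_neg_of_neg hAneg hBneg
  have hc3 : 0 ≤ -12*A*B*E := aux_c3 A B E hABpos hEneg
  have hc2 : 0 < 24*B^2*G - 28*A*B*D := aux_c2 A B G D hABpos hBneg hGpos hDle
  have hc1 : 24*A^2*E ≤ 0 := aux_c1 A E hEneg
  have hc0 : 8*A^2*D - 12*A*B*G < 0 := aux_c0 A B G D hABpos hGpos hDle
  have hν2z : ∀ z : ℝ, ν2 z = -12*A*B*E*z^3 + (24*B^2*G - 28*A*B*D)*z^2 + 24*A^2*E*z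
      + (8*A^2*D - 12*A*B*G) := fun z => by rw [hν2]
  have hν0 : ν2 0 < 0 := by
    have h : ν2 0 = 8*A^2*D - 12*A*B*G := by rw [hν2z]; ring
    linarith
  have hrc : 0 ≤ r*c := by rw [hE'] at hEneg; linarith
  have hν1 : 0 ≤ ν2 1 := by
    have key : ν2 1 = 8/9*s^2 + 8/3*r*(1-15*s+27*s^2) - 8/3*(r*c)*(2-15*s+27*s^2) := by
      rw [hν2z, hA', hB', hD', hG', hE']; ring
    rw [key]
    exact aux_nu1 s r c hr0 hs1 hNewt hrc (hc_def ▸ Real.cos_le_one θ)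
  have hmono : ∀ w1 w2 : ℝ, 0 < w1 → w1 < w2 → ν2 w1 * w2^2 < ν2 w2 * w1^2 := by
    intro w1 w2 hw1 h12
    have h := aux_mono (-12*A*B*E) (24*B^2*G - 28*A*B*D) (24*A^2*E) (8*A^2*D - 12*A*B*G)
      w1 w2 hc3 hc1 hc0 hw1 h12
    calc ν2 w1 * w2^2
        = ((-12*A*B*E)*w1^3 + (24*B^2*G - 28*A*B*D)*w1^2 + (24*A^2*E)*w1
          + (8*A^2*D - 12*A*B*G)) * w2^2 := by rw [hν2z]
      _ < ((-12*A*B*E)*w2^3 + (24*B^2*G - 28*A*B*D)*w2^2 + (24*A^2*E)*w2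
          + (8*A^2*D - 12*A*B*G)) * w1^2 := h
      _ = ν2 w2 * w1^2 := by rw [hν2z]
  have hcont : Continuous ν2 := by rw [hν2]; fun_prop
  obtain ⟨zs, hzs_mem, hzs_eq⟩ : ∃ zs ∈ Set.Ioc (0:ℝ) 1, ν2 zs = 0 := by
    have h := intermediate_value_Ioc (by norm_num : (0:ℝ) ≤ 1) hcont.continuousOn
    have h0mem : (0:ℝ) ∈ Set.Ioc (ν2 0) (ν2 1) := ⟨hν0, hν1⟩
    obtain ⟨zs, hmem, heq⟩ := h h0mem
    exact ⟨zs, hmem, heq⟩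
  have hzs0 : 0 < zs := hzs_mem.1
  have hneg : ∀ z ∈ Set.Ioo (0:ℝ) zs, ν2 z ≤ 0 := by
    intro z hz
    have h := hmono z zs hz.1 hz.2
    rw [hzs_eq, zero_mul] at h
    by_contra hq
    push_neg at hq
    have h2 : 0 < ν2 z * zs^2 := mul_pos hq (by positivity)
    linarith
  -- the analytic part
  obtain ⟨S, hS_def⟩ : ∃ S : ℝ → ℝ, S = fun w => Real.sqrt (-(A + B*w^2)) := ⟨_, rfl⟩
  have hPneg : ∀ w : ℝ, A + B*w^2 < 0 := fun w => by
    have h := mul_nonpos_of_nonpos_of_nonneg hBneg.le (sq_nonneg w)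
    linarith
  have hSpos : ∀ w : ℝ, 0 < S w := fun w => by
    rw [hS_def]; exact Real.sqrt_pos.2 (by linarith [hPneg w])
  have hS2 : ∀ w : ℝ, (S w)^2 = -(A + B*w^2) := fun w => by
    rw [hS_def]; exact Real.sq_sqrt (by linarith [hPneg w])
  have hg2 : g = fun w => 3*Real.sqrt 3/2 * (G + D*w^2 + E*w^3) / ((A + B*w^2) * S w) := by
    funext w
    simp only [hg, hQ, hP]
    rw [show (-3:ℝ)/(A + B*w^2) = 3/(-(A + B*w^2)) by rw [neg_div, div_neg]]
    rw [Real.sqrt_div (by norm_num : (0:ℝ) ≤ 3)]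
    simp only [hS_def]
    have hSne : Real.sqrt (-(A + B*w^2)) ≠ 0 :=
      ne_of_gt (Real.sqrt_pos.2 (by linarith [hPneg w]))
    have hPne : A + B*w^2 ≠ 0 := ne_of_lt (hPneg w)
    field_simp
  have hQd : ∀ w : ℝ, HasDerivAt (fun w => G + D*w^2 + E*w^3) (2*D*w + 3*E*w^2) w := by
    intro w
    have h2 : HasDerivAt (fun w : ℝ => w^2) (2*w) w := by simpa using hasDerivAt_pow 2 w
    have h3 : HasDerivAt (fun w : ℝ => w^3) (3*w^2) w := by simpa using hasDerivAt_pow 3 w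
    have h := ((h2.const_mul D).const_add G).add (h3.const_mul E)
    refine h.congr_deriv ?_
    ring
  have hPd : ∀ w : ℝ, HasDerivAt (fun w => A + B*w^2) (2*B*w) w := by
    intro w
    have h2 : HasDerivAt (fun w : ℝ => w^2) (2*w) w := by simpa using hasDerivAt_pow 2 w
    have h := (h2.const_mul B).const_add A
    refine h.congr_deriv ?_
    ring
  have hSd : ∀ w : ℝ, HasDerivAt S (-(2*B*w) / (2*S w)) w := by
    intro w
    have hne : (fun w : ℝ => -(A + B*w^2)) w ≠ 0 := by
      show -(A + B*w^2) ≠ 0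
      have := hPneg w
      intro hcon
      linarith [hcon ▸ (by linarith : (0:ℝ) < -(A + B*w^2))]
    have h := ((hPd w).neg).sqrt hne
    simp only [hS_def]
    exact h
  have hW : ∀ w : ℝ, (A + B*w^2) * S w ≠ 0 := fun w =>
    mul_ne_zero (ne_of_lt (hPneg w)) (ne_of_gt (hSpos w))
  have hgd : ∀ w : ℝ, HasDerivAt g
      ((3*Real.sqrt 3/2 * (2*D*w + 3*E*w^2) * ((A + B*w^2) * S w)
        - 3*Real.sqrt 3/2 * (G + D*w^2 + E*w^3)
          * (2*B*w * S w + (A + B*w^2) * (-(2*B*w) / (2*S w))))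
        / ((A + B*w^2) * S w)^2) w := by
    intro w
    rw [hg2]
    have hnum : HasDerivAt (fun w : ℝ => 3*Real.sqrt 3/2 * (G + D*w^2 + E*w^3))
        (3*Real.sqrt 3/2 * (2*D*w + 3*E*w^2)) w := (hQd w).const_mul _
    have hden : HasDerivAt (fun w : ℝ => (A + B*w^2) * S w)
        (2*B*w * S w + (A + B*w^2) * (-(2*B*w) / (2*S w))) w := (hPd w).mul (hSd w)
    exact hnum.div hden (hW w)
  have hgderiv : ∀ w : ℝ, deriv g w =
      (3*Real.sqrt 3/2 * (2*D*w + 3*E*w^2) * ((A + B*w^2) * S w)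
        - 3*Real.sqrt 3/2 * (G + D*w^2 + E*w^3)
          * (2*B*w * S w + (A + B*w^2) * (-(2*B*w) / (2*S w))))
        / ((A + B*w^2) * S w)^2 := fun w => (hgd w).deriv
  have hFc : (fun w => P w * deriv g w)
      = fun w => 3*Real.sqrt 3/2 * (2*D*w + 3*E*w^2) / S w
          + 3*Real.sqrt 3/2*(3*B) * (w * (G + D*w^2 + E*w^3)) / (S w)^3 := by
    funext w
    simp only [hP]
    rw [hgderiv w]
    have hPw : A + B*w^2 = -(S w)^2 := by linarith [hS2 w]
    rw [hPw]
    have hSne : S w ≠ 0 := ne_of_gt (hSpos w)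
    field_simp
    ring
  refine ⟨zs, hzs0, hzs_mem.2, hzs_eq, ?_, hneg, ?_⟩
  · intro w hw hweq
    rcases lt_trichotomy w zs with h | h | h
    · exfalso
      have h' := hmono w zs hw h
      rw [hweq, hzs_eq] at h'
      simp at h'
    · exact h
    · exfalso
      have h' := hmono zs w hzs0 h
      rw [hweq, hzs_eq] at h'
      simp at h'
  · intro z hz
    have hSz : S z ≠ 0 := ne_of_gt (hSpos z)
    have hlin : HasDerivAt (fun w : ℝ => 2*D*w + 3*E*w^2) (2*D + 6*E*z) z := by
      have hid : HasDerivAt (fun w : ℝ => w) 1 z := hasDerivAt_id z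
      have h2 : HasDerivAt (fun w : ℝ => w^2) (2*z) z := by simpa using hasDerivAt_pow 2 z
      have h := (hid.const_mul (2*D)).add (h2.const_mul (3*E))
      refine h.congr_deriv ?_
      ring
    have ht1 : HasDerivAt (fun w : ℝ => 3*Real.sqrt 3/2 * (2*D*w + 3*E*w^2) / S w)
        ((3*Real.sqrt 3/2 * (2*D + 6*E*z) * S z
          - 3*Real.sqrt 3/2 * (2*D*z + 3*E*z^2) * (-(2*B*z) / (2*S z))) / (S z)^2) z := by
      have hnum : HasDerivAt (fun w : ℝ => 3*Real.sqrt 3/2 * (2*D*w + 3*E*w^2))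
          (3*Real.sqrt 3/2 * (2*D + 6*E*z)) z := hlin.const_mul _
      exact hnum.div (hSd z) hSz
    have hden3 : HasDerivAt (fun w : ℝ => (S w)^3)
        ((3:ℝ) * (S z)^2 * (-(2*B*z) / (2*S z))) z := by
      have h := (hSd z).pow 3
      refine h.congr_deriv ?_; norm_num
    have ht2 : HasDerivAt
        (fun w : ℝ => 3*Real.sqrt 3/2*(3*B) * (w * (G + D*w^2 + E*w^3)) / (S w)^3)
        ((3*Real.sqrt 3/2*(3*B) * (1 * (G + D*z^2 + E*z^3) + z * (2*D*z + 3*E*z^2)) * (S z)^3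
          - 3*Real.sqrt 3/2*(3*B) * (z * (G + D*z^2 + E*z^3))
            * ((3:ℝ) * (S z)^2 * (-(2*B*z) / (2*S z)))) / ((S z)^3)^2) z := by
      have hid : HasDerivAt (fun w : ℝ => w) 1 z := hasDerivAt_id z
      have hnum : HasDerivAt (fun w : ℝ => 3*Real.sqrt 3/2*(3*B) * (w * (G + D*w^2 + E*w^3)))
          (3*Real.sqrt 3/2*(3*B) * (1 * (G + D*z^2 + E*z^3) + z * (2*D*z + 3*E*z^2))) z :=
        (hid.mul (hQd z)).const_mul _
      exact hnum.div hden3 (by positivity)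
    have hFd : HasDerivAt
        (fun w : ℝ => 3*Real.sqrt 3/2 * (2*D*w + 3*E*w^2) / S w
          + 3*Real.sqrt 3/2*(3*B) * (w * (G + D*w^2 + E*w^3)) / (S w)^3)
        ((3*Real.sqrt 3/2 * (2*D + 6*E*z) * S z
          - 3*Real.sqrt 3/2 * (2*D*z + 3*E*z^2) * (-(2*B*z) / (2*S z))) / (S z)^2
        + (3*Real.sqrt 3/2*(3*B) * (1 * (G + D*z^2 + E*z^3) + z * (2*D*z + 3*E*z^2)) * (S z)^3
          - 3*Real.sqrt 3/2*(3*B) * (z * (G + D*z^2 + E*z^3))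
            * ((3:ℝ) * (S z)^2 * (-(2*B*z) / (2*S z)))) / ((S z)^3)^2) z := ht1.add ht2
    have hmain : (3*Real.sqrt 3/2 * (2*D + 6*E*z) * S z
          - 3*Real.sqrt 3/2 * (2*D*z + 3*E*z^2) * (-(2*B*z) / (2*S z))) / (S z)^2
        + (3*Real.sqrt 3/2*(3*B) * (1 * (G + D*z^2 + E*z^3) + z * (2*D*z + 3*E*z^2)) * (S z)^3
          - 3*Real.sqrt 3/2*(3*B) * (z * (G + D*z^2 + E*z^3))
            * ((3:ℝ) * (S z)^2 * (-(2*B*z) / (2*S z)))) / ((S z)^3)^2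
        = (3 * Real.sqrt 3 / 8) * ν2 z / (Real.sqrt (-(P z)) * (P z)^2) := by
      simp only [hP]
      rw [show Real.sqrt (-(A + B*z^2)) = S z by rw [hS_def]]
      rw [hν2z]
      have hAz : A = -(S z)^2 - B*z^2 := by linarith [hS2 z]
      rw [hAz]
      field_simp
      ring
    constructor
    · rw [hFc, hFd.deriv]
      exact hmain
    · rw [hFc, hFd.deriv, hmain]
      have hν2neg : ν2 z ≤ 0 := hneg z hz
      have hnum : (3 * Real.sqrt 3 / 8) * ν2 z ≤ 0 :=
        mul_nonpos_of_nonneg_of_nonpos (by positivity) hν2neg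
      have hden : 0 ≤ Real.sqrt (-(P z)) * (P z)^2 := by positivity
      exact div_nonpos_of_nonpos_of_nonneg hnum hden
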